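/- Let l ≥ 1 be an integer, c > 0, and f(x) = c / x^l for nonzero real x. If x, y are nonzero reals with 2x + y ≠ 0, 2x - y ≠ 0, and 4 f(y)^(2/l) - f(x)^(2/l) ≠ 0, and additionally x, y > 0, then f(2x+y) + f(2x-y) = [2 f(x) f(y) * ∑_{k even, 0 ≤ k ≤ l} 2^(l-k) C(l,k) f(x)^(k/l) f(y)^((l-k)/l)] / (4 f(y)^(2/l) - f(x)^(2/l))^l. -/

import Mathlib

lemma aux_rpow_div_pow (c x : ℝ) (hc : 0 < c) (hx : 0 < x) (l k : ℕ) (hl : l ≠ 0) :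
    (c / x ^ l) ^ ((k : ℝ) / l) = c ^ ((k : ℝ) / l) / x ^ k := by
  rw [Real.div_rpow hc.le (pow_nonneg hx.le _)]
  congr 1
  rw [← Real.rpow_natCast x l, ← Real.rpow_mul hx.le, ← Real.rpow_natCast x k]
  congr 1
  field_simp

lemma aux_even_binom_sum (a b : ℝ) (l : ℕ) :
    2 * ∑ k ∈ (Finset.range (l + 1)).filter (fun k => Even k),
      (l.choose k : ℝ) * a ^ k * b ^ (l - k) = (b + a) ^ l + (b - a) ^ l := by
  have h1 : (b + a) ^ l = ∑ k ∈ Finset.range (l + 1), a ^ k * b ^ (l - k) * l.choose k := by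
    rw [add_comm b a, add_pow]
  have h2 : (b - a) ^ l = ∑ k ∈ Finset.range (l + 1), (-a) ^ k * b ^ (l - k) * l.choose k := by
    rw [sub_eq_add_neg, add_comm b (-a), add_pow]
  rw [h1, h2, ← Finset.sum_add_distrib, Finset.sum_filter, Finset.mul_sum]
  apply Finset.sum_congr rfl
  intro k _
  by_cases h : Even k
  · simp [h, h.neg_pow]
    ring
  · rw [if_neg h, (Nat.not_even_iff_odd.mp h).neg_pow]
    ring

lemma final_alg (c P Q X Y : ℝ) (hc : c ≠ 0) (hP : P ≠ 0) (hQ : Q ≠ 0)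
    (hX : X ≠ 0) (hY : Y ≠ 0) :
    c / P + c / Q =
      2 * (c / X) * (c / Y) * (c * ((P + Q) / (2 * (X * Y)))) /
        (c ^ 2 * (P * Q) / (X * Y) ^ 2) := by
  field_simp
  ring

theorem reciprocal_solves_equation (l : ℕ) (hl : 1 ≤ l) (c : ℝ) (hc : 0 < c)
    (f : ℝ → ℝ) (hf : ∀ x : ℝ, x ≠ 0 → f x = c / x ^ l)
    (x y : ℝ) (hx : x ≠ 0) (hy : y ≠ 0) (hx' : 0 < x) (hy' : 0 < y)
    (h1 : 2 * x + y ≠ 0) (h2 : 2 * x - y ≠ 0)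
    (h3 : 4 * f y ^ ((2 : ℝ) / l) - f x ^ ((2 : ℝ) / l) ≠ 0) :
    f (2 * x + y) + f (2 * x - y) =
      (2 * f x * f y *
        ∑ k ∈ (Finset.range (l + 1)).filter (fun k => Even k),
          (2 ^ (l - k) * Nat.choose l k : ℝ) *
            f x ^ ((k : ℝ) / l) * f y ^ (((l - k : ℕ) : ℝ) / l)) /
      (4 * f y ^ ((2 : ℝ) / l) - f x ^ ((2 : ℝ) / l)) ^ l := by
  have hl0 : l ≠ 0 := by omega
  have hlR : (l : ℝ) ≠ 0 := Nat.cast_ne_zero.mpr hl0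
  rw [hf _ h1, hf _ h2, hf x hx, hf y hy]
  -- simplify the sum
  have hsum : ∑ k ∈ (Finset.range (l + 1)).filter (fun k => Even k),
      (2 ^ (l - k) * Nat.choose l k : ℝ) *
        (c / x ^ l) ^ ((k : ℝ) / l) * (c / y ^ l) ^ (((l - k : ℕ) : ℝ) / l)
      = c * ∑ k ∈ (Finset.range (l + 1)).filter (fun k => Even k),
        (l.choose k : ℝ) * (1 / x) ^ k * (2 / y) ^ (l - k) := by
    rw [Finset.mul_sum]
    apply Finset.sum_congr rfl
    intro k hk
    have hkl : k ≤ l := by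
      have := Finset.mem_range.mp (Finset.mem_filter.mp hk).1; omega
    rw [aux_rpow_div_pow c x hc hx' l k hl0, aux_rpow_div_pow c y hc hy' l (l - k) hl0]
    have hcc : c ^ ((k : ℝ) / l) * c ^ (((l - k : ℕ) : ℝ) / l) = c := by
      rw [← Real.rpow_add hc]
      have : (k : ℝ) / l + ((l - k : ℕ) : ℝ) / l = 1 := by
        rw [Nat.cast_sub hkl]; field_simp; ring
      rw [this, Real.rpow_one]
    calc (2 ^ (l - k) * Nat.choose l k : ℝ) * (c ^ ((k : ℝ) / l) / x ^ k) *
            (c ^ (((l - k : ℕ) : ℝ) / l) / y ^ (l - k))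
        = (c ^ ((k : ℝ) / l) * c ^ (((l - k : ℕ) : ℝ) / l)) *
            ((l.choose k : ℝ) * (1 / x) ^ k * (2 / y) ^ (l - k)) := by
          rw [div_pow, div_pow, one_pow]; ring
      _ = c * ((l.choose k : ℝ) * (1 / x) ^ k * (2 / y) ^ (l - k)) := by rw [hcc]
  rw [hsum]
  have hbin : 2 * ∑ k ∈ (Finset.range (l + 1)).filter (fun k => Even k),
      (l.choose k : ℝ) * (1 / x) ^ k * (2 / y) ^ (l - k)
      = ((2 * x + y) / (x * y)) ^ l + ((2 * x - y) / (x * y)) ^ l := by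
    have ea : (2 : ℝ) / y + 1 / x = (2 * x + y) / (x * y) := by
      rw [eq_div_iff (mul_ne_zero hx hy)]
      field_simp
      try ring
      try tauto
    have eb : (2 : ℝ) / y - 1 / x = (2 * x - y) / (x * y) := by
      rw [eq_div_iff (mul_ne_zero hx hy)]
      field_simp
      try ring
      try tauto
    rw [aux_even_binom_sum (1 / x) (2 / y) l, ea, eb]
  -- denominator rpow simplification
  have hdy : (c / y ^ l) ^ ((2 : ℝ) / l) = c ^ ((2 : ℝ) / l) / y ^ 2 := by
    have := aux_rpow_div_pow c y hc hy' l 2 hl0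
    simpa using this
  have hdx : (c / x ^ l) ^ ((2 : ℝ) / l) = c ^ ((2 : ℝ) / l) / x ^ 2 := by
    have := aux_rpow_div_pow c x hc hx' l 2 hl0
    simpa using this
  rw [hdy, hdx]
  have hcl : (c ^ ((2 : ℝ) / l)) ^ l = c ^ 2 := by
    rw [← Real.rpow_natCast (c ^ ((2 : ℝ) / l)) l, ← Real.rpow_mul hc.le]
    rw [div_mul_cancel₀ _ hlR, Real.rpow_two]
    try ring
  have hden : (4 * (c ^ ((2 : ℝ) / l) / y ^ 2) - c ^ ((2 : ℝ) / l) / x ^ 2) ^ l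
      = c ^ 2 * ((2 * x + y) * (2 * x - y)) ^ l / (x * y) ^ (2 * l) := by
    have : 4 * (c ^ ((2 : ℝ) / l) / y ^ 2) - c ^ ((2 : ℝ) / l) / x ^ 2
        = c ^ ((2 : ℝ) / l) * ((2 * x + y) * (2 * x - y)) / (x * y) ^ 2 := by
      field_simp; ring
    rw [this, div_pow, mul_pow, hcl, ← pow_mul]
  rw [hden]
  -- now pure field arithmetic
  have hS := hbin
  set S := ∑ k ∈ (Finset.range (l + 1)).filter (fun k => Even k),
      (l.choose k : ℝ) * (1 / x) ^ k * (2 / y) ^ (l - k) with hSdef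
  have hA : (2 * x + y) ^ l ≠ 0 := pow_ne_zero _ h1
  have hB : (2 * x - y) ^ l ≠ 0 := pow_ne_zero _ h2
  have hxl : x ^ l ≠ 0 := pow_ne_zero _ hx
  have hyl : y ^ l ≠ 0 := pow_ne_zero _ hy
  have hSval : S = ((2 * x + y) ^ l + (2 * x - y) ^ l) / (2 * (x * y) ^ l) := by
    have hxy : (x * y) ^ l ≠ 0 := pow_ne_zero _ (mul_ne_zero hx hy)
    rw [div_pow, div_pow] at hS
    field_simp at hS ⊢
    try linarith [hS]
    try ring_nf
    try linarith [hS]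
  rw [hSval]
  have e2 : (x * y) ^ (2 * l) = (x ^ l * y ^ l) ^ 2 := by
    rw [mul_comm 2 l, pow_mul, mul_pow]
  rw [e2, mul_pow (2 * x + y) (2 * x - y) l, mul_pow x y l]
  exact final_alg c _ _ _ _ hc.ne' hA hB hxl hyl
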